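/- Suppose 0 < Z_SR ≤ Z_SD and Z_RD > 0, S > 0. Then the supremum of x1 + x2 + x3 over all feasible tuples (t1, t2, α, x1, x2, x3) of the three-node flow optimization problem equals log(1 + Z_SD·S); i.e., when the source–destination gain is at least the source–relay gain, the maximum achievable rate is C(Z_SD·S), achieved by direct transmission. -/

import Mathlib

open Real

/-- Shannon-type capacity function `C(x) = log (1 + x)` (natural logarithm). -/
noncomputable def capC (x : ℝ) : ℝ := Real.log (1 + x)

/-- Feasibility of a tuple `(t1, t2, α, x1, x2, x3)` for the three-node
flow optimization problem with link gains `ZSD, ZSR, ZRD` and transmit SNR `S`. -/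
def Feasible (ZSD ZSR ZRD S t1 t2 α x1 x2 x3 : ℝ) : Prop :=
  0 ≤ t1 ∧ 0 ≤ t2 ∧ t1 + t2 = 1 ∧ 0 ≤ α ∧ α ≤ 1 ∧
  0 ≤ x1 ∧ 0 ≤ x2 ∧ 0 ≤ x3 ∧
  x2 ≤ t2 * capC (ZRD * S) ∧
  x3 ≤ t2 * capC (ZSD * S) ∧
  x2 + x3 ≤ t2 * capC ((ZSD + ZRD) * S) ∧
  (ZSR ≤ ZSD →
    x1 ≤ t1 * capC (ZSD * α * S) ∧
    x2 ≤ t1 * capC (ZSR * (1 - α) * S / (1 + ZSR * α * S))) ∧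
  (ZSD < ZSR →
    x1 ≤ t1 * capC (ZSD * α * S / (1 + ZSD * (1 - α) * S)) ∧
    x2 ≤ t1 * capC (ZSR * (1 - α) * S))

/-- Key log inequality for the broadcast slot. -/
lemma capC_bc_sum (ZSD ZSR S α : ℝ) (hZSR : 0 < ZSR) (hZ : ZSR ≤ ZSD)
    (hS : 0 < S) (hα0 : 0 ≤ α) (hα1 : α ≤ 1) :
    capC (ZSD * α * S) + capC (ZSR * (1 - α) * S / (1 + ZSR * α * S))
      ≤ capC (ZSD * S) := by
  have hZSD : 0 < ZSD := lt_of_lt_of_le hZSR hZ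
  have h1 : (0:ℝ) < 1 + ZSD * α * S := by positivity
  have h2 : (0:ℝ) < 1 + ZSR * α * S := by positivity
  have h3 : (0:ℝ) < 1 + ZSR * S := by positivity
  have hq : 1 + ZSR * (1 - α) * S / (1 + ZSR * α * S)
      = (1 + ZSR * S) / (1 + ZSR * α * S) := by
    field_simp; ring
  unfold capC
  rw [hq, ← Real.log_mul (ne_of_gt h1) (ne_of_gt (by positivity))]
  apply Real.log_le_log (by positivity)
  rw [← mul_div_assoc, div_le_iff₀ h2]
  nlinarith [mul_nonneg (mul_nonneg (sub_nonneg.2 hα1) (sub_nonneg.2 hZ)) hS.le]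

theorem sup_rate_eq_direct_of_strong_direct_link
    (ZSD ZSR ZRD S : ℝ) (hZSR : 0 < ZSR) (hZ : ZSR ≤ ZSD) (hZRD : 0 < ZRD)
    (hS : 0 < S) :
    sSup {x : ℝ | ∃ t1 t2 α x1 x2 x3 : ℝ,
        Feasible ZSD ZSR ZRD S t1 t2 α x1 x2 x3 ∧ x = x1 + x2 + x3}
      = capC (ZSD * S) := by
  have hZSD : 0 < ZSD := lt_of_lt_of_le hZSR hZ
  have hcap0 : 0 ≤ capC (ZSD * S) := Real.log_nonneg (by nlinarith)
  have hmono : capC (ZSD * S) ≤ capC ((ZSD + ZRD) * S) := by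
    apply Real.log_le_log (by nlinarith)
    nlinarith
  apply IsGreatest.csSup_eq
  constructor
  · -- membership: direct transmission
    refine ⟨0, 1, 0, 0, 0, capC (ZSD * S), ?_, by ring⟩
    refine ⟨le_refl _, zero_le_one, by ring, le_refl _, zero_le_one,
      le_refl _, le_refl _, hcap0,
      by simpa using (show 0 ≤ capC (ZRD * S) from Real.log_nonneg (by nlinarith : (1:ℝ) ≤ 1 + ZRD * S)),
      by simp, by simpa using hmono, ?_, ?_⟩ <;> intro _ <;> simp
  · -- upper bound
    rintro x ⟨t1, t2, α, x1, x2, x3, ⟨ht1, ht2, hsum, hα0, hα1, hx1, hx2, hx3,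
      _, hx3le, _, hbc, _⟩, rfl⟩
    obtain ⟨hb1, hb2⟩ := hbc hZ
    have key := capC_bc_sum ZSD ZSR S α hZSR hZ hS hα0 hα1
    have h12 : x1 + x2 ≤ t1 * capC (ZSD * S) := by
      calc x1 + x2 ≤ t1 * capC (ZSD * α * S)
            + t1 * capC (ZSR * (1 - α) * S / (1 + ZSR * α * S)) := add_le_add hb1 hb2
        _ = t1 * (capC (ZSD * α * S) + capC (ZSR * (1 - α) * S / (1 + ZSR * α * S))) := by ring
        _ ≤ t1 * capC (ZSD * S) := mul_le_mul_of_nonneg_left key ht1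
    nlinarith [hx3le]
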